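/- Assume additionally that the metrics are strictly increasing: m_1 < m_2 < … < m_n. Let x* be a maximizer of f on C with x* ≠ 0, and let i_o = max{ i : x*_i > 0 }. Then x*_i = 1 for every i < i_o and x*_i = 0 for every i > i_o. Moreover, if 1/(1 + S_0 + Σ_{p=1}^{i_o} S_p) ≥ m_{i_o} then x*_{i_o} = 1, and otherwise x*_{i_o} = (1/m_{i_o} − (1 + S_0 + Σ_{p=1}^{i_o−1} S_p))/S_{i_o}, which lies in the open interval (0,1). -/

import Mathlib

set_option maxHeartbeats 1000000 in
theorem aperture_structure_strict_mono
    (n : ℕ) (hn : 1 ≤ n)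
    (ω β lam S0 : ℝ) (hω : 0 < ω) (hβ : 0 < β) (hlam : 0 ≤ lam) (hS0 : 0 ≤ S0)
    (S ψ : Fin n → ℝ) (hS : ∀ i, 0 < S i) (hψ : ∀ i, 0 ≤ ψ i)
    (g f : (Fin n → ℝ) → ℝ)
    (hg : ∀ x, g x = 1 + S0 + ∑ i, S i * x i)
    (hf : ∀ x, f x = ω * β * Real.log (g x) - ∑ i, (lam + β * ψ i) * x i)
    (m : Fin n → ℝ) (hm : ∀ i, m i = (β * ψ i + lam) / (ω * β * S i))
    (hmono : StrictMono m)
    (x : Fin n → ℝ)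
    (hxC : ∀ i, x i ∈ Set.Icc (0:ℝ) 1)
    (hxmax : ∀ y : Fin n → ℝ, (∀ i, y i ∈ Set.Icc (0:ℝ) 1) → f y ≤ f x)
    (hxne : x ≠ 0)
    (io : Fin n)
    (hio_pos : 0 < x io)
    (hio_max : ∀ i, 0 < x i → i ≤ io) :
    (∀ i, i < io → x i = 1) ∧
    (∀ i, io < i → x i = 0) ∧
    (m io ≤ 1 / (1 + S0 + ∑ p ∈ Finset.Iic io, S p) → x io = 1) ∧
    (1 / (1 + S0 + ∑ p ∈ Finset.Iic io, S p) < m io →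
      x io = (1 / m io - (1 + S0 + ∑ p ∈ Finset.Iio io, S p)) / S io ∧
      x io ∈ Set.Ioo (0:ℝ) 1) := by
  obtain ⟨A, hA⟩ : ∃ A : ℝ, A = ω * β := ⟨_, rfl⟩
  have hApos : 0 < A := hA ▸ mul_pos hω hβ
  obtain ⟨c, hcdef⟩ : ∃ c : Fin n → ℝ, c = fun i => lam + β * ψ i := ⟨_, rfl⟩
  have hceq : ∀ i, c i = lam + β * ψ i := fun i => by rw [hcdef]
  have hc0 : ∀ i, 0 ≤ c i := fun i =>
    (hceq i) ▸ add_nonneg hlam (mul_nonneg hβ.le (hψ i))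
  have hx0 : ∀ i, 0 ≤ x i := fun i => (hxC i).1
  have hx1 : ∀ i, x i ≤ 1 := fun i => (hxC i).2
  have hm' : ∀ i, m i = c i / (A * S i) := by
    intro i; rw [hm i, hceq i, hA]; ring_nf
  -- x vanishes above io
  have hB : ∀ i, io < i → x i = 0 := by
    intro i hi
    by_contra h
    exact absurd (hio_max i (lt_of_le_of_ne (hx0 i) (Ne.symm h))) (not_le.mpr hi)
  have hsum_nonneg : 0 ≤ ∑ j, S j * x j :=
    Finset.sum_nonneg fun j _ => mul_nonneg (hS j).le (hx0 j)
  have hgx : g x = 1 + S0 + ∑ j, S j * x j := hg x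
  have hg1 : (1:ℝ) ≤ g x := by rw [hgx]; linarith
  have hgpos : 0 < g x := lt_of_lt_of_le one_pos hg1
  -- sums under coordinate update
  have hupdate : ∀ (w : Fin n → ℝ) (i : Fin n) (a : ℝ),
      ∑ j, w j * Function.update x i a j = (∑ j, w j * x j) + w i * (a - x i) := by
    intro w i a
    have h1 : ∀ j : Fin n, w j * Function.update x i a j
        = w j * x j + (if j = i then w i * (a - x i) else 0) := by
      intro j
      rcases eq_or_ne j i with rfl | hji
      · simp [Function.update_self]; ring
      · simp [Function.update_of_ne hji, hji]
    rw [Finset.sum_congr rfl fun j _ => h1 j, Finset.sum_add_distrib,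
      Finset.sum_ite_eq' Finset.univ i]
    simp
  -- key perturbation inequality
  have key : ∀ (i : Fin n) (t : ℝ), 0 ≤ x i + t → x i + t ≤ 1 →
      A * Real.log (g x + S i * t) - A * Real.log (g x) ≤ c i * t := by
    intro i t h0 h1
    set y := Function.update x i (x i + t) with hy
    have hyC : ∀ j, y j ∈ Set.Icc (0:ℝ) 1 := by
      intro j
      rcases eq_or_ne j i with rfl | hji
      · simpa [hy] using Set.mem_Icc.mpr ⟨h0, h1⟩
      · simpa [hy, Function.update_of_ne hji] using hxC j
    have hgy : g y = g x + S i * t := by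
      rw [hg y, hgx, hupdate]; ring
    have hcy : ∑ j, (lam + β * ψ j) * y j = (∑ j, (lam + β * ψ j) * x j) + c i * t := by
      rw [hy, hupdate, hceq i]; ring
    have hmax := hxmax y hyC
    rw [hf y, hf x, hgy, hcy, ← hA] at hmax
    linarith
  -- K1 : if x i < 1 then A * S i ≤ c i * g x
  have K1 : ∀ i, x i < 1 → A * S i ≤ c i * g x := by
    intro i hxi
    by_contra hcon
    push_neg at hcon
    obtain ⟨δ, hδ⟩ : ∃ δ : ℝ, δ = A * S i - c i * g x := ⟨_, rfl⟩
    have hδpos : 0 < δ := by rw [hδ]; linarith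
    have hden : (0:ℝ) < 2 * (c i * S i + 1) := by nlinarith [hc0 i, hS i]
    obtain ⟨t, ht⟩ : ∃ t : ℝ, t = min (1 - x i) (δ / (2 * (c i * S i + 1))) := ⟨_, rfl⟩
    have htpos : 0 < t := ht ▸ lt_min (by linarith) (div_pos hδpos hden)
    have ht1 : x i + t ≤ 1 := by
      have := min_le_left (1 - x i) (δ / (2 * (c i * S i + 1)))
      rw [← ht] at this; linarith
    have htle : t ≤ δ / (2 * (c i * S i + 1)) := ht ▸ min_le_right _ _
    have hvpos : 0 < g x + S i * t := by nlinarith [hS i]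
    have hlog : S i * t / (g x + S i * t) ≤ Real.log (g x + S i * t) - Real.log (g x) := by
      have h1 := Real.log_le_sub_one_of_pos (div_pos hgpos hvpos)
      rw [Real.log_div hgpos.ne' hvpos.ne'] at h1
      have h2 : g x / (g x + S i * t) - 1 = -(S i * t / (g x + S i * t)) := by
        field_simp
        ring
      rw [h2] at h1
      linarith
    have hk := key i t (by linarith [hx0 i]) ht1
    have h2a : A * (S i * t / (g x + S i * t)) ≤ A * (Real.log (g x + S i * t) - Real.log (g x)) :=
      mul_le_mul_of_nonneg_left hlog hApos.le
    have h2b : A * (Real.log (g x + S i * t) - Real.log (g x))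
        = A * Real.log (g x + S i * t) - A * Real.log (g x) := by ring
    have h2 : A * (S i * t / (g x + S i * t)) ≤ c i * t := by
      rw [h2b] at h2a; linarith
    have h4 : A * (S i * t) ≤ c i * t * (g x + S i * t) := by
      rw [← mul_div_assoc] at h2
      exact (div_le_iff₀ hvpos).mp h2
    have h5 : A * S i ≤ c i * (g x + S i * t) := by
      have h5' : (A * S i) * t ≤ (c i * (g x + S i * t)) * t := by nlinarith [h4]
      exact le_of_mul_le_mul_right h5' htpos
    have h6 : (c i * S i + 1) * t ≤ δ / 2 := by
      have := (le_div_iff₀ hden).mp htle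
      nlinarith [this]
    nlinarith [h5, h6, htpos, hδpos, hc0 i]
  -- K2 : if 0 < x i then c i * g x ≤ A * S i
  have K2 : ∀ i, 0 < x i → c i * g x ≤ A * S i := by
    intro i hxi
    by_contra hcon
    push_neg at hcon
    obtain ⟨δ, hδ⟩ : ∃ δ : ℝ, δ = c i * g x - A * S i := ⟨_, rfl⟩
    have hδpos : 0 < δ := by rw [hδ]; linarith
    have hden : (0:ℝ) < 2 * (c i * S i + 1) := by nlinarith [hc0 i, hS i]
    obtain ⟨s, hs⟩ : ∃ s : ℝ, s = min (x i) (δ / (2 * (c i * S i + 1))) := ⟨_, rfl⟩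
    have hspos : 0 < s := hs ▸ lt_min hxi (div_pos hδpos hden)
    have hsle : s ≤ δ / (2 * (c i * S i + 1)) := hs ▸ min_le_right _ _
    have hsx : s ≤ x i := hs ▸ min_le_left _ _
    have hSix : S i * x i ≤ ∑ j, S j * x j :=
      Finset.single_le_sum (fun j _ => mul_nonneg (hS j).le (hx0 j)) (Finset.mem_univ i)
    have hvpos : 0 < g x - S i * s := by
      have : S i * s ≤ S i * x i := mul_le_mul_of_nonneg_left hsx (hS i).le
      rw [hgx]; linarith
    have hk := key i (-s) (by linarith) (by linarith [hx1 i])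
    have hveq : g x + S i * (-s) = g x - S i * s := by ring
    rw [hveq] at hk
    have hlog : Real.log (g x) - Real.log (g x - S i * s) ≤ S i * s / (g x - S i * s) := by
      have h1 := Real.log_le_sub_one_of_pos (div_pos hgpos hvpos)
      rw [Real.log_div hgpos.ne' hvpos.ne'] at h1
      have h2 : g x / (g x - S i * s) - 1 = S i * s / (g x - S i * s) := by field_simp; ring
      rw [h2] at h1
      linarith
    have h2a : A * (Real.log (g x) - Real.log (g x - S i * s))
        ≤ A * (S i * s / (g x - S i * s)) := mul_le_mul_of_nonneg_left hlog hApos.le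
    have h2b : A * (Real.log (g x) - Real.log (g x - S i * s))
        = -(A * Real.log (g x - S i * s) - A * Real.log (g x)) := by ring
    have h2 : c i * s ≤ A * (S i * s / (g x - S i * s)) := by
      rw [h2b] at h2a; linarith
    have h4 : c i * s * (g x - S i * s) ≤ A * (S i * s) := by
      rw [← mul_div_assoc] at h2
      exact (le_div_iff₀ hvpos).mp h2
    have h5 : c i * (g x - S i * s) ≤ A * S i := by
      have h5' : (c i * (g x - S i * s)) * s ≤ (A * S i) * s := by nlinarith [h4]
      exact le_of_mul_le_mul_right h5' hspos
    have h6 : (c i * S i + 1) * s ≤ δ / 2 := by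
      have := (le_div_iff₀ hden).mp hsle
      nlinarith [this]
    nlinarith [h5, h6, hspos, hδpos, hc0 i]
  -- Claim A : full below io
  have hA1 : ∀ i, i < io → x i = 1 := by
    intro i hi
    by_contra hne
    have hlt : x i < 1 := lt_of_le_of_ne (hx1 i) hne
    have k1 := K1 i hlt
    have k2 := K2 io hio_pos
    have hmlt := hmono hi
    rw [hm' i, hm' io,
      div_lt_div_iff₀ (mul_pos hApos (hS i)) (mul_pos hApos (hS io))] at hmlt
    -- hmlt : c i * (A * S io) < c io * (A * S i)
    have hcross : c i * S io < c io * S i := by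
      have h' : A * (c i * S io) < A * (c io * S i) := by nlinarith [hmlt]
      exact lt_of_mul_lt_mul_left h' hApos.le
    have e1 : A * S i * S io ≤ c i * g x * S io := mul_le_mul_of_nonneg_right k1 (hS io).le
    have e2 : c io * g x * S i ≤ A * S io * S i := mul_le_mul_of_nonneg_right k2 (hS i).le
    have e3 : c i * S io * g x < c io * S i * g x := mul_lt_mul_of_pos_right hcross hgpos
    nlinarith [e1, e2, e3]
  -- sum over all coords reduces to Iic io
  have hsum_split : ∑ j, S j * x j = ∑ j ∈ Finset.Iic io, S j * x j := by
    refine (Finset.sum_subset (Finset.subset_univ _) ?_).symm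
    intro j _ hj
    have : io < j := not_le.mp (fun h => hj (Finset.mem_Iic.mpr h))
    rw [hB j this, mul_zero]
  have hSsum0 : 0 ≤ ∑ p ∈ Finset.Iic io, S p := Finset.sum_nonneg fun p _ => (hS p).le
  have hG1pos : 0 < 1 + S0 + ∑ p ∈ Finset.Iic io, S p := by linarith
  refine ⟨hA1, hB, ?_, ?_⟩
  · -- threshold satisfied ⇒ x io = 1
    intro hth
    by_contra hne
    have hlt : x io < 1 := lt_of_le_of_ne (hx1 io) hne
    have k1 := K1 io hlt
    have hslt : ∑ j ∈ Finset.Iic io, S j * x j < ∑ j ∈ Finset.Iic io, S j := by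
      refine Finset.sum_lt_sum (fun j _ => ?_) ⟨io, Finset.mem_Iic.mpr le_rfl, ?_⟩
      · nlinarith [hS j, hx1 j, hx0 j]
      · nlinarith [hS io]
    have hgG : g x < 1 + S0 + ∑ p ∈ Finset.Iic io, S p := by
      rw [hgx, hsum_split]; linarith
    have hlow : 1 / g x ≤ m io := by
      rw [hm' io, div_le_div_iff₀ hgpos (mul_pos hApos (hS io))]
      nlinarith [k1]
    have := one_div_lt_one_div_of_lt hgpos hgG
    linarith
  · -- threshold violated ⇒ fractional value
    intro hth
    have hlt1 : x io < 1 := by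
      by_contra h'
      have hxe : x io = 1 := le_antisymm (hx1 io) (not_lt.mp h')
      have hgeq : g x = 1 + S0 + ∑ p ∈ Finset.Iic io, S p := by
        rw [hgx, hsum_split]
        have hcg : ∀ j ∈ Finset.Iic io, S j * x j = S j := by
          intro j hj
          rcases (Finset.mem_Iic.mp hj).lt_or_eq with h | h
          · rw [hA1 j h, mul_one]
          · rw [h, hxe, mul_one]
        rw [Finset.sum_congr rfl hcg]
      have k2 := K2 io hio_pos
      have hup : m io ≤ 1 / g x := by
        rw [hm' io, div_le_div_iff₀ (mul_pos hApos (hS io)) hgpos]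
        nlinarith [k2]
      rw [hgeq] at hup
      linarith
    have hceq2 : c io * g x = A * S io := le_antisymm (K2 io hio_pos) (K1 io hlt1)
    have hmpos : 0 < m io := lt_trans (one_div_pos.mpr hG1pos) hth
    have hcpos : 0 < c io := by
      rcases (hc0 io).lt_or_eq with h | h
      · exact h
      · exfalso; rw [hm' io, ← h] at hmpos; simp at hmpos
    have hgm : g x = 1 / m io := by
      rw [hm' io, one_div_div, eq_div_iff hcpos.ne']
      linear_combination hceq2
    have hsplit2 : g x = (1 + S0 + ∑ p ∈ Finset.Iio io, S p) + S io * x io := by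
      rw [hgx, hsum_split, ← Finset.Iio_insert io,
        Finset.sum_insert (by simp)]
      have hIio : ∑ p ∈ Finset.Iio io, S p * x p = ∑ p ∈ Finset.Iio io, S p :=
        Finset.sum_congr rfl fun j hj => by rw [hA1 j (Finset.mem_Iio.mp hj), mul_one]
      rw [hIio]; ring
    refine ⟨?_, ⟨hio_pos, hlt1⟩⟩
    rw [eq_div_iff (hS io).ne']
    linear_combination hgm - hsplit2
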